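/- Let n, s ≥ 1. Let A be a nonnegative n×n real matrix, b and c nonnegative vectors in ℝⁿ, and d ≥ 0 a real number, and let M be the (n+1)×(n+1) block matrix M = [[A, b],[cᵀ, d]]. Let B be the n×s matrix each of whose columns equals b, let C be a nonnegative s×n matrix whose j-th column sum equals c_j for every j, and let D be a nonnegative s×s matrix all of whose column sums equal d. Set M̃ = [[A, B],[C, D]]. Then the spectral radius of M̃ equals the spectral radius of M. -/

import Mathlib

open Matrix

/-- Spectral radius of a real square matrix: the maximum of the moduli of its
complex eigenvalues (elements of the spectrum of the matrix over `ℂ`). -/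
noncomputable def specRad {n : Type*} [Fintype n] [DecidableEq n]
    (M : Matrix n n ℝ) : ℝ :=
  sSup ((fun z : ℂ => ‖z‖) '' spectrum ℂ (M.map (algebraMap ℝ ℂ)))

attribute [local instance] Matrix.linftyOpNormedRing Matrix.linftyOpNormedAlgebra

section Helpers

lemma spec_iff_det {m : Type*} [Fintype m] [DecidableEq m] (N : Matrix m m ℂ) (z : ℂ) :
    z ∈ spectrum ℂ N ↔ (z • (1 : Matrix m m ℂ) - N).det = 0 := by
  rw [spectrum.mem_iff, Matrix.isUnit_iff_isUnit_det, isUnit_iff_ne_zero, not_ne_iff,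
    Algebra.algebraMap_eq_smul_one]

lemma spec_iff_eig {m : Type*} [Fintype m] [DecidableEq m] (N : Matrix m m ℂ) (z : ℂ) :
    z ∈ spectrum ℂ N ↔ ∃ v, v ≠ 0 ∧ N.mulVec v = z • v := by
  rw [spec_iff_det, ← Matrix.exists_mulVec_eq_zero_iff]
  constructor
  · rintro ⟨v, hv, he⟩
    refine ⟨v, hv, ?_⟩
    rw [Matrix.sub_mulVec, Matrix.smul_mulVec, Matrix.one_mulVec, sub_eq_zero] at he
    exact he.symm
  · rintro ⟨v, hv, he⟩
    refine ⟨v, hv, ?_⟩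
    rw [Matrix.sub_mulVec, Matrix.smul_mulVec, Matrix.one_mulVec, he, sub_self]

lemma spec_transpose {m : Type*} [Fintype m] [DecidableEq m] (N : Matrix m m ℂ) (z : ℂ) :
    z ∈ spectrum ℂ Nᵀ ↔ z ∈ spectrum ℂ N := by
  rw [spec_iff_det, spec_iff_det, ← Matrix.det_transpose (z • (1 : Matrix m m ℂ) - N),
    Matrix.transpose_sub, Matrix.transpose_smul, Matrix.transpose_one]

lemma spec_iff_eig_left {m : Type*} [Fintype m] [DecidableEq m] (N : Matrix m m ℂ) (z : ℂ) :
    z ∈ spectrum ℂ N ↔ ∃ v, v ≠ 0 ∧ N.vecMul v = z • v := by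
  rw [← spec_transpose, spec_iff_eig]
  simp only [Matrix.mulVec_transpose]

lemma vecMul_apply {m n : Type*} [Fintype m] (N : Matrix m n ℂ) (v : m → ℂ) (j : n) :
    N.vecMul v j = ∑ i, v i * N i j := rfl

lemma mulVec_apply' {m n : Type*} [Fintype n] (N : Matrix m n ℂ) (v : n → ℂ) (i : m) :
    N.mulVec v i = ∑ j, N i j * v j := rfl

lemma nnnorm_entry_le {m : Type*} [Fintype m] [DecidableEq m] (P : Matrix m m ℂ) (i j : m) :
    ‖P i j‖₊ ≤ ‖P‖₊ := by
  rw [Matrix.linfty_opNNNorm_def]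
  exact le_trans (Finset.single_le_sum (f := fun j => ‖P i j‖₊) (fun _ _ => zero_le)
    (Finset.mem_univ j)) (Finset.le_sup (f := fun i => ∑ j, ‖P i j‖₊) (Finset.mem_univ i))

/-- A diagonal entry of an entrywise-nonnegative real matrix is at most the
spectral radius. -/
lemma diag_le_specRad {m : Type*} [Fintype m] [DecidableEq m] [Nonempty m]
    (M : Matrix m m ℝ) (hM : ∀ i j, 0 ≤ M i j) (e : m) : M e e ≤ specRad M := by
  classical
  set N : Matrix m m ℂ := M.map (algebraMap ℝ ℂ) with hN
  have hfin : ((fun z : ℂ => ‖z‖) '' spectrum ℂ N).Finite := (Matrix.finite_spectrum N).image _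
  have hbdd : BddAbove ((fun z : ℂ => ‖z‖) '' spectrum ℂ N) := hfin.bddAbove
  have hne : (spectrum ℂ N).Nonempty := spectrum.nonempty N
  have hρ0 : 0 ≤ specRad M := by
    obtain ⟨z, hz⟩ := hne
    exact le_trans (norm_nonneg z) (le_csSup hbdd ⟨z, hz, rfl⟩)
  have hpow : ∀ k : ℕ, (∀ i j, 0 ≤ (M ^ k) i j) ∧ (M e e) ^ k ≤ (M ^ k) e e := by
    intro k
    induction k with
    | zero => simp [Matrix.one_apply]; intro i j; positivity
    | succ k ih =>
      constructor
      · intro i j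
        rw [pow_succ, Matrix.mul_apply]
        exact Finset.sum_nonneg fun l _ => mul_nonneg (ih.1 i l) (hM l j)
      · calc (M e e) ^ (k + 1) = (M e e) ^ k * M e e := pow_succ _ _
        _ ≤ (M ^ k) e e * M e e := mul_le_mul_of_nonneg_right ih.2 (hM e e)
        _ ≤ ∑ l, (M ^ k) e l * M l e :=
            Finset.single_le_sum (f := fun l => (M ^ k) e l * M l e)
              (fun l _ => mul_nonneg (ih.1 e l) (hM l e)) (Finset.mem_univ e)
        _ = (M ^ (k + 1)) e e := by rw [pow_succ, Matrix.mul_apply]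
  have hNk : ∀ k : ℕ, ((M e e) ^ k).toNNReal ≤ ‖N ^ k‖₊ := by
    intro k
    have hmap : N ^ k = (M ^ k).map (algebraMap ℝ ℂ) := by
      rw [hN, ← RingHom.mapMatrix_apply, ← RingHom.mapMatrix_apply, ← map_pow]
    rw [← NNReal.coe_le_coe, Real.coe_toNNReal _ (pow_nonneg (hM e e) k), coe_nnnorm]
    calc (M e e) ^ k ≤ (M ^ k) e e := (hpow k).2
    _ = ‖(N ^ k) e e‖ := by
        rw [hmap, Matrix.map_apply]
        rw [Complex.coe_algebraMap, Complex.norm_real,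
          Real.norm_of_nonneg ((hpow k).1 e e)]
    _ ≤ ‖N ^ k‖ := by exact_mod_cast nnnorm_entry_le (N ^ k) e e
  -- Gelfand's formula
  have hlim := spectrum.pow_nnnorm_pow_one_div_tendsto_nhds_spectralRadius N
  have hge : ((M e e).toNNReal : ENNReal) ≤ spectralRadius ℂ N := by
    refine ge_of_tendsto hlim ?_
    rw [Filter.eventually_atTop]
    refine ⟨1, fun k hk => ?_⟩
    have h1 : (((M e e).toNNReal : ENNReal) ^ (k : ℕ)) ^ (1 / (k : ℝ)) =
        ((M e e).toNNReal : ENNReal) := by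
      rw [← ENNReal.rpow_natCast, ← ENNReal.rpow_mul, mul_one_div,
        div_self (by exact_mod_cast Nat.one_le_iff_ne_zero.mp hk : (k : ℝ) ≠ 0),
        ENNReal.rpow_one]
    rw [← h1]
    refine ENNReal.rpow_le_rpow ?_ (by positivity)
    rw [← ENNReal.coe_pow]
    exact_mod_cast (Real.toNNReal_pow (hM e e) k ▸ hNk k)
  have hsr : spectralRadius ℂ N ≤ ENNReal.ofReal (specRad M) := by
    unfold spectralRadius
    refine iSup₂_le fun z hz => ?_
    refine (le_of_eq (ofReal_norm z).symm).trans ?_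
    refine ENNReal.ofReal_le_ofReal ?_
    exact le_csSup hbdd ⟨z, hz, rfl⟩
  have hfinal := le_trans hge hsr
  rw [← ENNReal.ofReal] at hfinal
  exact (ENNReal.ofReal_le_ofReal_iff hρ0).mp hfinal

variable {n s : ℕ} (A : Matrix (Fin n) (Fin n) ℂ) (b c : Fin n → ℂ) (d : ℂ)
  (C : Matrix (Fin s) (Fin n) ℂ) (D : Matrix (Fin s) (Fin s) ℂ)

lemma stepA (hs : 0 < s) (hC : ∀ j, ∑ i, C i j = c j) (hD : ∀ j, ∑ i, D i j = d) :
    spectrum ℂ (Matrix.fromBlocks A (Matrix.of fun i (_ : Fin 1) => b i)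
        (Matrix.of fun (_ : Fin 1) j => c j) (Matrix.of fun (_ : Fin 1) (_ : Fin 1) => d)) ⊆
      spectrum ℂ (Matrix.fromBlocks A (Matrix.of fun i (_ : Fin s) => b i) C D) := by
  intro z hz
  obtain ⟨v, hv0, hvl⟩ := (spec_iff_eig_left _ _).mp hz
  refine (spec_iff_eig_left _ _).mpr ⟨Sum.elim (fun i => v (Sum.inl i))
    (fun _ : Fin s => v (Sum.inr 0)), ?_, ?_⟩
  · intro h
    apply hv0
    funext x
    cases x with
    | inl i => exact congrFun h (Sum.inl i)
    | inr k =>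
      have := congrFun h (Sum.inr ⟨0, hs⟩)
      simpa [Subsingleton.elim k 0] using this
  · funext x
    have hl := fun j => congrFun hvl j
    cases x with
    | inl j =>
      have h1 := hl (Sum.inl j)
      simp only [_root_.vecMul_apply, Fintype.sum_sum_type, Matrix.fromBlocks_apply₁₁,
        Matrix.fromBlocks_apply₂₁, Matrix.of_apply, Pi.smul_apply, smul_eq_mul,
        Fin.sum_univ_one, Sum.elim_inl, Sum.elim_inr] at h1 ⊢
      have factor : ∑ x : Fin s, v (Sum.inr 0) * C x j = v (Sum.inr 0) * c j := by
        rw [← Finset.mul_sum, hC j]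
      rw [factor]
      exact h1
    | inr k =>
      have h1 := hl (Sum.inr 0)
      simp only [_root_.vecMul_apply, Fintype.sum_sum_type, Matrix.fromBlocks_apply₁₂,
        Matrix.fromBlocks_apply₂₂, Matrix.of_apply, Pi.smul_apply, smul_eq_mul,
        Fin.sum_univ_one, Sum.elim_inl, Sum.elim_inr] at h1 ⊢
      have factor : ∑ x : Fin s, v (Sum.inr 0) * D x k = v (Sum.inr 0) * d := by
        rw [← Finset.mul_sum, hD k]
      rw [factor]
      exact h1

lemma stepB (hC : ∀ j, ∑ i, C i j = c j) (hD : ∀ j, ∑ i, D i j = d) :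
    spectrum ℂ (Matrix.fromBlocks A (Matrix.of fun i (_ : Fin s) => b i) C D) ⊆
      spectrum ℂ (Matrix.fromBlocks A (Matrix.of fun i (_ : Fin 1) => b i)
        (Matrix.of fun (_ : Fin 1) j => c j)
        (Matrix.of fun (_ : Fin 1) (_ : Fin 1) => d)) ∪ spectrum ℂ D := by
  intro z hz
  obtain ⟨v, hv0, hve⟩ := (spec_iff_eig _ _).mp hz
  have hv := fun x => congrFun hve x
  simp only [mulVec_apply', Fintype.sum_sum_type, Matrix.fromBlocks_apply₁₁,
    Matrix.fromBlocks_apply₁₂, Matrix.fromBlocks_apply₂₁, Matrix.fromBlocks_apply₂₂,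
    Matrix.of_apply, Pi.smul_apply, smul_eq_mul] at hv
  by_cases hw : (Sum.elim (fun i => v (Sum.inl i))
      (fun _ : Fin 1 => ∑ k, v (Sum.inr k)) : Fin n ⊕ Fin 1 → ℂ) = 0
  · right
    have hinl : ∀ i, v (Sum.inl i) = 0 := fun i => congrFun hw (Sum.inl i)
    have hsum : ∑ k, v (Sum.inr k) = 0 := congrFun hw (Sum.inr 0)
    refine (spec_iff_eig _ _).mpr ⟨fun k => v (Sum.inr k), ?_, ?_⟩
    · intro h
      apply hv0
      funext x
      cases x with
      | inl i => exact hinl i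
      | inr k => exact congrFun h k
    · funext k
      have h1 := hv (Sum.inr k)
      simp only [Matrix.fromBlocks_apply₂₁, Matrix.fromBlocks_apply₂₂, Matrix.of_apply,
        hinl, mul_zero, Finset.sum_const_zero, zero_add] at h1
      simpa [mulVec_apply'] using h1
  · left
    refine (spec_iff_eig _ _).mpr ⟨_, hw, ?_⟩
    funext x
    cases x with
    | inl i =>
      have h1 := hv (Sum.inl i)
      simp only [Matrix.fromBlocks_apply₁₁, Matrix.fromBlocks_apply₁₂, Matrix.of_apply] at h1
      simp only [mulVec_apply', Fintype.sum_sum_type, Matrix.fromBlocks_apply₁₁,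
        Matrix.fromBlocks_apply₁₂, Matrix.of_apply, Pi.smul_apply, smul_eq_mul,
        Fin.sum_univ_one, Sum.elim_inl, Sum.elim_inr]
      have factor : b i * ∑ k, v (Sum.inr k) = ∑ k, b i * v (Sum.inr k) :=
        Finset.mul_sum _ _ _
      rw [factor]
      exact h1
    | inr k =>
      simp only [mulVec_apply', Fintype.sum_sum_type, Matrix.fromBlocks_apply₂₁,
        Matrix.fromBlocks_apply₂₂, Matrix.of_apply, Pi.smul_apply, smul_eq_mul,
        Fin.sum_univ_one, Sum.elim_inl, Sum.elim_inr]
      have h2 : ∑ k', z * v (Sum.inr k') =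
          ∑ k' : Fin s, (∑ j, C k' j * v (Sum.inl j) + ∑ l, D k' l * v (Sum.inr l)) := by
        refine Finset.sum_congr rfl fun k' _ => ?_
        have h1 := hv (Sum.inr k')
        simp only [Matrix.fromBlocks_apply₂₁, Matrix.fromBlocks_apply₂₂, Matrix.of_apply] at h1
        exact h1.symm
      rw [Finset.sum_add_distrib, Finset.sum_comm, Finset.sum_comm (γ := Fin s)] at h2
      simp only [← Finset.sum_mul, hC, hD, ← Finset.mul_sum] at h2
      exact h2.symm

lemma stepC {s : ℕ} (d : ℝ) (D : Matrix (Fin s) (Fin s) ℝ) (hD : ∀ i j, 0 ≤ D i j)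
    (hDcol : ∀ j, ∑ i, D i j = d) (z : ℂ)
    (hz : z ∈ spectrum ℂ (D.map (algebraMap ℝ ℂ))) : ‖z‖ ≤ d := by
  obtain ⟨v, hv0, hve⟩ := (spec_iff_eig _ _).mp hz
  set S := ∑ k, ‖v k‖ with hS
  have hSpos : 0 < S := by
    obtain ⟨k, hk⟩ := Function.ne_iff.mp hv0
    have hk' : v k ≠ 0 := fun h => hk (by simp [h])
    refine lt_of_lt_of_le (norm_pos_iff.mpr hk') ?_
    exact Finset.single_le_sum (f := fun k => ‖v k‖)
      (fun _ _ => norm_nonneg _) (Finset.mem_univ k)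
  have key : ‖z‖ * S ≤ d * S := by
    calc ‖z‖ * S = ∑ k, ‖z * v k‖ := by
          rw [hS, Finset.mul_sum]
          exact Finset.sum_congr rfl fun k _ => (norm_mul _ _).symm
    _ = ∑ k, ‖((D.map (algebraMap ℝ ℂ)).mulVec v k)‖ := by
          refine Finset.sum_congr rfl fun k _ => ?_
          rw [hve]
          simp
    _ ≤ ∑ k, ∑ j, D k j * ‖v j‖ := by
          refine Finset.sum_le_sum fun k _ => ?_
          refine le_trans (norm_sum_le Finset.univ
            (fun j => (D.map (algebraMap ℝ ℂ)) k j * v j)) ?_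
          refine Finset.sum_le_sum fun j _ => ?_
          rw [norm_mul]
          simp only [Matrix.map_apply, Complex.coe_algebraMap, Complex.norm_real, Real.norm_eq_abs,
            abs_of_nonneg (hD k j), le_refl]
    _ = ∑ j, (∑ k, D k j) * ‖v j‖ := by
          rw [Finset.sum_comm]
          exact Finset.sum_congr rfl fun j _ => (Finset.sum_mul _ _ _).symm
    _ = d * S := by
          simp only [hDcol, hS, Finset.mul_sum]
  exact le_of_mul_le_mul_right key hSpos

end Helpers

/-- A column sum expansion of a nonnegative matrix on its last diagonal entry
preserves the spectral radius. -/
theorem colSumExpansion_specRad_eq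
    {n s : ℕ} (hn : 1 ≤ n) (hs : 1 ≤ s)
    (A : Matrix (Fin n) (Fin n) ℝ) (b c : Fin n → ℝ) (d : ℝ)
    (hA : ∀ i j, 0 ≤ A i j) (hb : ∀ i, 0 ≤ b i) (hc : ∀ i, 0 ≤ c i) (hd : 0 ≤ d)
    (C : Matrix (Fin s) (Fin n) ℝ) (hC : ∀ i j, 0 ≤ C i j)
    (hCcol : ∀ j, ∑ i, C i j = c j)
    (D : Matrix (Fin s) (Fin s) ℝ) (hD : ∀ i j, 0 ≤ D i j)
    (hDcol : ∀ j, ∑ i, D i j = d) :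
    specRad (Matrix.fromBlocks A
        (Matrix.of fun (i : Fin n) (_ : Fin s) => b i) C D) =
      specRad (Matrix.fromBlocks A
        (Matrix.of fun (i : Fin n) (_ : Fin 1) => b i)
        (Matrix.of fun (_ : Fin 1) (j : Fin n) => c j)
        (Matrix.of fun (_ : Fin 1) (_ : Fin 1) => d)) := by
  classical
  haveI : NeZero n := ⟨by omega⟩
  haveI : NeZero s := ⟨by omega⟩
  haveI : Nonempty (Fin n ⊕ Fin 1) := ⟨Sum.inr 0⟩
  haveI : Nonempty (Fin n ⊕ Fin s) := ⟨Sum.inr 0⟩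
  set φ := algebraMap ℝ ℂ with hφ
  set Mt : Matrix (Fin n ⊕ Fin s) (Fin n ⊕ Fin s) ℝ :=
    Matrix.fromBlocks A (Matrix.of fun (i : Fin n) (_ : Fin s) => b i) C D with hMt
  set M0 : Matrix (Fin n ⊕ Fin 1) (Fin n ⊕ Fin 1) ℝ :=
    Matrix.fromBlocks A (Matrix.of fun (i : Fin n) (_ : Fin 1) => b i)
      (Matrix.of fun (_ : Fin 1) (j : Fin n) => c j)
      (Matrix.of fun (_ : Fin 1) (_ : Fin 1) => d) with hM0
  have hmapt : Mt.map φ = Matrix.fromBlocks (A.map φ)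
      (Matrix.of fun i (_ : Fin s) => φ (b i)) (C.map φ) (D.map φ) := by
    rw [hMt, Matrix.fromBlocks_map]
    rfl
  have hmap0 : M0.map φ = Matrix.fromBlocks (A.map φ)
      (Matrix.of fun i (_ : Fin 1) => φ (b i))
      (Matrix.of fun (_ : Fin 1) j => φ (c j))
      (Matrix.of fun (_ : Fin 1) (_ : Fin 1) => φ d) := by
    rw [hM0, Matrix.fromBlocks_map]
    rfl
  have hC' : ∀ j, ∑ i, (C.map φ) i j = φ (c j) := fun j => by
    simp only [Matrix.map_apply]
    rw [← map_sum, hCcol]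
  have hD' : ∀ j, ∑ i, (D.map φ) i j = φ d := fun j => by
    simp only [Matrix.map_apply]
    rw [← map_sum, hDcol]
  have hsub1 : spectrum ℂ (M0.map φ) ⊆ spectrum ℂ (Mt.map φ) := by
    rw [hmapt, hmap0]
    exact stepA (A.map φ) (fun i => φ (b i)) (fun j => φ (c j)) (φ d) (C.map φ) (D.map φ)
      (by omega) hC' hD'
  have hsub2 : spectrum ℂ (Mt.map φ) ⊆ spectrum ℂ (M0.map φ) ∪ spectrum ℂ (D.map φ) := by
    rw [hmapt, hmap0]
    exact stepB (A.map φ) (fun i => φ (b i)) (fun j => φ (c j)) (φ d) (C.map φ) (D.map φ)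
      hC' hD'
  have hM0nn : ∀ i j, 0 ≤ M0 i j := by
    rintro (i | i) (j | j) <;>
      simp only [hM0, Matrix.fromBlocks_apply₁₁, Matrix.fromBlocks_apply₁₂,
        Matrix.fromBlocks_apply₂₁, Matrix.fromBlocks_apply₂₂, Matrix.of_apply]
    exacts [hA i j, hb i, hc j, hd]
  have hdle : d ≤ specRad M0 := by
    have := diag_le_specRad M0 hM0nn (Sum.inr 0)
    simpa [hM0] using this
  have hbdd0 : BddAbove ((fun z : ℂ => ‖z‖) '' spectrum ℂ (M0.map φ)) :=
    ((Matrix.finite_spectrum _).image _).bddAbove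
  have hbddt : BddAbove ((fun z : ℂ => ‖z‖) '' spectrum ℂ (Mt.map φ)) :=
    ((Matrix.finite_spectrum _).image _).bddAbove
  have hρ0 : 0 ≤ specRad M0 := le_trans hd hdle
  have hρt : 0 ≤ specRad Mt := by
    obtain ⟨z, hz⟩ := spectrum.nonempty (Mt.map φ)
    exact le_trans (norm_nonneg z) (le_csSup hbddt ⟨z, hz, rfl⟩)
  apply le_antisymm
  · refine Real.sSup_le ?_ hρ0
    rintro x ⟨z, hz, rfl⟩
    rcases hsub2 hz with h | h
    · exact le_csSup hbdd0 ⟨z, h, rfl⟩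
    · exact le_trans (stepC d D hD hDcol z h) hdle
  · refine Real.sSup_le ?_ hρt
    rintro x ⟨z, hz, rfl⟩
    exact le_csSup hbddt ⟨z, hsub1 hz, rfl⟩
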